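/- Let ε > 0 and let A ⊆ [0, ∞) be a Lebesgue measurable set such that μ(A ∩ [0, n]) ≥ εn for every natural number n, where μ is Lebesgue measure. Then there exists a measurable set A′ ⊆ A such that μ(A′ ∩ [0, n]) ≥ (ε/2)n for every natural number n, and such that for every natural number n the set [n, n+1] \ A′ contains an interval of length 1/2. -/

import Mathlib

open MeasureTheory

lemma icc_le_ico_vol (A : Set ℝ) (a b : ℝ) :
    volume (A ∩ Set.Icc a b) ≤ volume (A ∩ Set.Ico a b) := by
  have hsub : A ∩ Set.Icc a b ⊆ (A ∩ Set.Ico a b) ∪ {b} := by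
    rintro x ⟨hxA, hx1, hx2⟩
    rcases lt_or_eq_of_le hx2 with h | h
    · exact Or.inl ⟨hxA, hx1, h⟩
    · exact Or.inr (by simp [h])
  calc volume (A ∩ Set.Icc a b) ≤ volume ((A ∩ Set.Ico a b) ∪ {b}) := measure_mono hsub
    _ ≤ volume (A ∩ Set.Ico a b) + volume ({b} : Set ℝ) := measure_union_le _ _
    _ = volume (A ∩ Set.Ico a b) := by simp

lemma half_choice (A : Set ℝ) (hAmeas : MeasurableSet A) (k : ℕ) :
    ∃ c : ℝ, Set.Icc c (c + 1/2) ⊆ Set.Icc (k : ℝ) ((k : ℝ) + 1) ∧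
      2 * volume (A ∩ Set.Icc c (c + 1/2)) ≤ volume (A ∩ Set.Icc (k : ℝ) ((k : ℝ) + 1)) := by
  set m : ℝ := (k : ℝ) + 1/2 with hm
  have hkm : (k : ℝ) ≤ m := by norm_num [hm]
  have hmk : m ≤ (k : ℝ) + 1 := by norm_num [hm]
  have hsum : volume (A ∩ Set.Icc (k : ℝ) m) + volume (A ∩ Set.Icc m ((k:ℝ)+1))
      ≤ volume (A ∩ Set.Icc (k : ℝ) ((k:ℝ)+1)) := by
    have hdisj : Disjoint (A ∩ Set.Ico (k:ℝ) m) (A ∩ Set.Icc m ((k:ℝ)+1)) := by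
      apply Set.disjoint_left.2
      rintro x ⟨_, _, h1⟩ ⟨_, h2, _⟩
      exact absurd h2 (not_le.2 h1)
    have hun : (A ∩ Set.Ico (k:ℝ) m) ∪ (A ∩ Set.Icc m ((k:ℝ)+1)) = A ∩ Set.Icc (k:ℝ) ((k:ℝ)+1) := by
      rw [← Set.inter_union_distrib_left, Set.Ico_union_Icc_eq_Icc hkm hmk]
    calc volume (A ∩ Set.Icc (k : ℝ) m) + volume (A ∩ Set.Icc m ((k:ℝ)+1))
        ≤ volume (A ∩ Set.Ico (k:ℝ) m) + volume (A ∩ Set.Icc m ((k:ℝ)+1)) :=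
          add_le_add_left (icc_le_ico_vol A _ _) _
      _ = volume ((A ∩ Set.Ico (k:ℝ) m) ∪ (A ∩ Set.Icc m ((k:ℝ)+1))) :=
          (measure_union hdisj (hAmeas.inter measurableSet_Icc)).symm
      _ = volume (A ∩ Set.Icc (k:ℝ) ((k:ℝ)+1)) := by rw [hun]
  rcases le_total (volume (A ∩ Set.Icc (k:ℝ) m)) (volume (A ∩ Set.Icc m ((k:ℝ)+1))) with h | h
  · refine ⟨(k : ℝ), ?_, ?_⟩
    · exact Set.Icc_subset_Icc le_rfl (by norm_num)
    · have hmeq : (k : ℝ) + 1/2 = m := rfl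
      rw [hmeq, two_mul]
      exact le_trans (add_le_add_right h _) hsum
  · refine ⟨m, ?_, ?_⟩
    · have : m + 1/2 = (k:ℝ) + 1 := by rw [hm]; ring
      rw [this]
      exact Set.Icc_subset_Icc hkm le_rfl
    · have : m + 1/2 = (k:ℝ) + 1 := by rw [hm]; ring
      rw [this, two_mul]
      exact le_trans (add_le_add_left h _) hsum

/-- Let `ε > 0` and let `A ⊆ [0, ∞)` be a Lebesgue measurable set with
`μ(A ∩ [0, n]) ≥ εn` for every natural number `n`.  Then there is a measurable
subset `A′ ⊆ A` with `μ(A′ ∩ [0, n]) ≥ (ε/2)n` for every natural number `n`, such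
that for every natural number `n` the set `[n, n+1] \ A′` contains an interval of
length `1/2`. -/
theorem erase_half_keeps_density_and_leaves_gaps
    (ε : ℝ) (hε : 0 < ε)
    (A : Set ℝ) (hAmeas : MeasurableSet A) (hA : A ⊆ Set.Ici (0 : ℝ))
    (hdens : ∀ n : ℕ, ENNReal.ofReal (ε * n) ≤ volume (A ∩ Set.Icc (0 : ℝ) n)) :
    ∃ A' : Set ℝ, A' ⊆ A ∧ MeasurableSet A' ∧
      (∀ n : ℕ, ENNReal.ofReal ((ε / 2) * n) ≤ volume (A' ∩ Set.Icc (0 : ℝ) n)) ∧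
      (∀ n : ℕ, ∃ a b : ℝ, b - a = 1 / 2 ∧
        Set.Icc a b ⊆ Set.Icc (n : ℝ) (n + 1) \ A') := by
  choose c hsub hhalf using fun k => half_choice A hAmeas k
  set G : Set ℝ := ⋃ k : ℕ, Set.Icc (c k) (c k + 1/2) with hG
  have hGmeas : MeasurableSet G := MeasurableSet.iUnion fun k => measurableSet_Icc
  refine ⟨A \ G, Set.diff_subset, hAmeas.diff hGmeas, ?_, ?_⟩
  · intro n
    have hfin : volume (A ∩ Set.Icc (0:ℝ) n) ≠ ⊤ := by
      refine ne_top_of_le_ne_top ?_ (measure_mono Set.inter_subset_right)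
      simp [Real.volume_Icc]
    have hcover : A ∩ Set.Icc (0:ℝ) n ⊆ ((A \ G) ∩ Set.Icc (0:ℝ) n) ∪
        ((⋃ k ∈ Finset.range n, A ∩ Set.Icc (c k) (c k + 1/2)) ∪ {(n:ℝ)}) := by
      rintro x ⟨hxA, hx0, hxn⟩
      by_cases hxG : x ∈ G
      · rcases Set.mem_iUnion.1 hxG with ⟨k, hk⟩
        have hkx := hsub k hk
        by_cases hkn : k < n
        · exact Or.inr (Or.inl (Set.mem_biUnion (Finset.mem_range.2 hkn) ⟨hxA, hk⟩))
        · have hnk : (n:ℝ) ≤ (k:ℝ) := by exact_mod_cast not_lt.1 hkn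
          have : (n:ℝ) ≤ x := le_trans hnk hkx.1
          exact Or.inr (Or.inr (by simpa using le_antisymm hxn this))
      · exact Or.inl ⟨⟨hxA, hxG⟩, hx0, hxn⟩
    have hbound : volume (A ∩ Set.Icc (0:ℝ) n) ≤ volume ((A \ G) ∩ Set.Icc (0:ℝ) n) +
        ∑ k ∈ Finset.range n, volume (A ∩ Set.Icc (c k) (c k + 1/2)) := by
      calc volume (A ∩ Set.Icc (0:ℝ) n)
          ≤ volume (((A \ G) ∩ Set.Icc (0:ℝ) n) ∪
            ((⋃ k ∈ Finset.range n, A ∩ Set.Icc (c k) (c k + 1/2)) ∪ {(n:ℝ)})) :=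
            measure_mono hcover
        _ ≤ volume ((A \ G) ∩ Set.Icc (0:ℝ) n) +
            volume ((⋃ k ∈ Finset.range n, A ∩ Set.Icc (c k) (c k + 1/2)) ∪ {(n:ℝ)}) :=
            measure_union_le _ _
        _ ≤ volume ((A \ G) ∩ Set.Icc (0:ℝ) n) +
            (volume (⋃ k ∈ Finset.range n, A ∩ Set.Icc (c k) (c k + 1/2)) +
              volume ({(n:ℝ)} : Set ℝ)) :=
            add_le_add_right (measure_union_le _ _) _
        _ = volume ((A \ G) ∩ Set.Icc (0:ℝ) n) +
            volume (⋃ k ∈ Finset.range n, A ∩ Set.Icc (c k) (c k + 1/2)) := by simp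
        _ ≤ volume ((A \ G) ∩ Set.Icc (0:ℝ) n) +
            ∑ k ∈ Finset.range n, volume (A ∩ Set.Icc (c k) (c k + 1/2)) :=
            add_le_add_right (measure_biUnion_finset_le _ _) _
    have hpart : ∑ k ∈ Finset.range n, volume (A ∩ Set.Icc (k:ℝ) ((k:ℝ)+1)) ≤
        volume (A ∩ Set.Icc (0:ℝ) n) := by
      have hdisj : (↑(Finset.range n) : Set ℕ).PairwiseDisjoint
          (fun k : ℕ => A ∩ Set.Ico (k:ℝ) ((k:ℝ)+1)) := by
        intro i _ j _ hij
        apply Set.disjoint_left.2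
        rintro x ⟨_, hi1, hi2⟩ ⟨_, hj1, hj2⟩
        rcases lt_or_gt_of_ne hij with h | h
        · have : (i:ℝ) + 1 ≤ (j:ℝ) := by exact_mod_cast Nat.succ_le_of_lt h
          linarith
        · have : (j:ℝ) + 1 ≤ (i:ℝ) := by exact_mod_cast Nat.succ_le_of_lt h
          linarith
      calc ∑ k ∈ Finset.range n, volume (A ∩ Set.Icc (k:ℝ) ((k:ℝ)+1))
          ≤ ∑ k ∈ Finset.range n, volume (A ∩ Set.Ico (k:ℝ) ((k:ℝ)+1)) :=
            Finset.sum_le_sum fun k _ => icc_le_ico_vol A _ _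
        _ = volume (⋃ k ∈ Finset.range n, A ∩ Set.Ico (k:ℝ) ((k:ℝ)+1)) :=
            (measure_biUnion_finset hdisj fun k _ => hAmeas.inter measurableSet_Ico).symm
        _ ≤ volume (A ∩ Set.Icc (0:ℝ) n) := by
            apply measure_mono
            rintro x hx
            rcases Set.mem_iUnion₂.1 hx with ⟨k, hk, hxA, hx1, hx2⟩
            have hk' : k < n := Finset.mem_range.1 hk
            have h1 : (0:ℝ) ≤ x := le_trans (by positivity) hx1
            have h2 : (k:ℝ) + 1 ≤ (n:ℝ) := by exact_mod_cast Nat.succ_le_of_lt hk'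
            exact ⟨hxA, h1, le_trans (le_of_lt hx2) h2⟩
    have hkey : volume (A ∩ Set.Icc (0:ℝ) n) ≤ volume ((A \ G) ∩ Set.Icc (0:ℝ) n) +
        volume (A ∩ Set.Icc (0:ℝ) n) / 2 := by
      refine hbound.trans (add_le_add_right ?_ _)
      rw [ENNReal.le_div_iff_mul_le (Or.inl two_ne_zero) (Or.inl ENNReal.ofNat_ne_top)]
      calc (∑ k ∈ Finset.range n, volume (A ∩ Set.Icc (c k) (c k + 1/2))) * 2
          = ∑ k ∈ Finset.range n, 2 * volume (A ∩ Set.Icc (c k) (c k + 1/2)) := by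
            rw [Finset.sum_mul]; exact Finset.sum_congr rfl fun k _ => mul_comm _ _
        _ ≤ ∑ k ∈ Finset.range n, volume (A ∩ Set.Icc (k:ℝ) ((k:ℝ)+1)) :=
            Finset.sum_le_sum fun k _ => hhalf k
        _ ≤ volume (A ∩ Set.Icc (0:ℝ) n) := hpart
    have h2 : volume (A ∩ Set.Icc (0:ℝ) n) / 2 ≤ volume ((A \ G) ∩ Set.Icc (0:ℝ) n) := by
      have := tsub_le_iff_right.2 hkey
      rwa [ENNReal.sub_half hfin] at this
    calc ENNReal.ofReal ((ε / 2) * n) = ENNReal.ofReal ((ε * n) / 2) := by ring_nf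
      _ = ENNReal.ofReal (ε * n) / ENNReal.ofReal 2 := ENNReal.ofReal_div_of_pos (by norm_num)
      _ = ENNReal.ofReal (ε * n) / 2 := by norm_num
      _ ≤ volume (A ∩ Set.Icc (0:ℝ) n) / 2 := ENNReal.div_le_div_right (hdens n) 2
      _ ≤ volume ((A \ G) ∩ Set.Icc (0:ℝ) n) := h2
  · intro n
    refine ⟨c n, c n + 1/2, by ring, ?_⟩
    intro x hx
    refine ⟨hsub n hx, ?_⟩
    rintro ⟨-, hxG⟩
    exact hxG (Set.mem_iUnion.2 ⟨n, hx⟩)
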